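/- Fix an integer L ≥ 2, an index j ∈ {1,…,L}, and positive reals p_f, p_r, τ and β_{jl} for l = 1,…,L as well as positive reals β_{il} for all i, l ∈ {1,…,L} (with β_{jl} among them). Define κ_l = 1 + p_r τ Σ_{i=1}^{L} β_{il} for each l, e(M) = Γ(M + 1/2)/Γ(M), and for each positive integer M the rate R_j(M) = log₂( 1 + [ p_f β_{jj} (p_r τ β_{jj}/κ_j) e(M)² ] / [ 1 + p_f β_{jj} (p_r τ β_{jj}/κ_j)(M − e(M)²) + Σ_{l≠j} p_f β_{jl} (p_r τ β_{jl}/κ_l) M + Σ_{l=1}^{L} p_f β_{jl} (1 + p_r τ Σ_{i≠j} β_{il})/κ_l ] ). Then as M → ∞, R_j(M) converges to log₂( 1 + ( β_{jj}² / κ_j ) / ( Σ_{l≠j} β_{jl}² / κ_l ) ). -/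
import Mathlib


open Filter Finset

private lemma gamma_half_upper (x : ℝ) (hx : 0 < x) :
    Real.Gamma (x + 1/2) ≤ Real.Gamma x * Real.sqrt x := by
  have hΓx : 0 < Real.Gamma x := Real.Gamma_pos_of_pos hx
  have hΓh : 0 < Real.Gamma (x + 1/2) := Real.Gamma_pos_of_pos (by linarith)
  have hcv := Real.convexOn_log_Gamma.2 (Set.mem_Ioi.mpr hx)
      (Set.mem_Ioi.mpr (by linarith : (0:ℝ) < x + 1))
      (by norm_num : (0:ℝ) ≤ 1/2) (by norm_num : (0:ℝ) ≤ 1/2) (by norm_num)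
  simp only [smul_eq_mul, Function.comp_apply] at hcv
  have harg : (1/2 : ℝ) * x + (1/2 : ℝ) * (x+1) = x + 1/2 := by ring
  rw [harg, Real.Gamma_add_one hx.ne', Real.log_mul hx.ne' hΓx.ne'] at hcv
  have h2 : Real.log (Real.Gamma (x+1/2)) ≤ Real.log (Real.Gamma x * Real.sqrt x) := by
    rw [Real.log_mul hΓx.ne' (by positivity : Real.sqrt x ≠ 0), Real.log_sqrt hx.le]
    linarith
  exact (Real.log_le_log_iff hΓh (by positivity)).mp h2

private lemma gamma_half_lower (x : ℝ) (hx : 0 < x) :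
    x * Real.Gamma x ≤ Real.Gamma (x + 1/2) * Real.sqrt (x + 1/2) := by
  have hΓx : 0 < Real.Gamma x := Real.Gamma_pos_of_pos hx
  have hxh : (0:ℝ) < x + 1/2 := by linarith
  have hΓh : 0 < Real.Gamma (x + 1/2) := Real.Gamma_pos_of_pos hxh
  have hcv := Real.convexOn_log_Gamma.2 (Set.mem_Ioi.mpr hxh)
      (Set.mem_Ioi.mpr (by linarith : (0:ℝ) < x + 3/2))
      (by norm_num : (0:ℝ) ≤ 1/2) (by norm_num : (0:ℝ) ≤ 1/2) (by norm_num)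
  simp only [smul_eq_mul, Function.comp_apply] at hcv
  have harg : (1/2:ℝ)*(x+1/2) + (1/2:ℝ)*(x+3/2) = x + 1 := by ring
  have h32 : x + 3/2 = (x + 1/2) + 1 := by ring
  rw [harg, h32, Real.Gamma_add_one hxh.ne', Real.Gamma_add_one hx.ne',
      Real.log_mul hxh.ne' hΓh.ne', Real.log_mul hx.ne' hΓx.ne'] at hcv
  have h2 : Real.log (x * Real.Gamma x) ≤
      Real.log (Real.Gamma (x+1/2) * Real.sqrt (x+1/2)) := by
    rw [Real.log_mul hx.ne' hΓx.ne',
        Real.log_mul hΓh.ne' (by positivity : Real.sqrt (x+1/2) ≠ 0), Real.log_sqrt hxh.le]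
    linarith
  exact (Real.log_le_log_iff (by positivity) (by positivity)).mp h2

/-- The Gamma-ratio `e(M) = Γ(M+1/2)/Γ(M)` satisfies `e(M)²/M → 1`. -/
private lemma e_sq_div_tendsto (e : ℕ → ℝ)
    (he : ∀ M : ℕ, e M = Real.Gamma ((M : ℝ) + 1 / 2) / Real.Gamma (M : ℝ)) :
    Tendsto (fun M : ℕ => e M ^ 2 / (M : ℝ)) atTop (nhds 1) := by
  have hlowlim : Tendsto (fun M : ℕ => (M : ℝ) / ((M : ℝ) + 1/2)) atTop (nhds 1) :=
    tendsto_natCast_div_add_atTop (1/2 : ℝ)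
  refine tendsto_of_tendsto_of_tendsto_of_le_of_le' hlowlim tendsto_const_nhds ?_ ?_
  · filter_upwards [eventually_ge_atTop 1] with M hM
    have hs : (0:ℝ) < (M:ℝ) := by exact_mod_cast Nat.lt_of_lt_of_le Nat.zero_lt_one hM
    have hΓx : 0 < Real.Gamma (M:ℝ) := Real.Gamma_pos_of_pos hs
    have hxh : (0:ℝ) < (M:ℝ) + 1/2 := by linarith
    have hkey := gamma_half_lower (M:ℝ) hs
    have hsle : (M:ℝ) ≤ e M * Real.sqrt ((M:ℝ) + 1/2) := by
      rw [he, div_mul_eq_mul_div, le_div_iff₀ hΓx]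
      linarith [hkey]
    rw [div_le_div_iff₀ hxh hs]
    have hsq : (M:ℝ)^2 ≤ (e M * Real.sqrt ((M:ℝ) + 1/2))^2 :=
      pow_le_pow_left₀ hs.le hsle 2
    rw [mul_pow, Real.sq_sqrt hxh.le] at hsq
    nlinarith [hsq]
  · filter_upwards [eventually_ge_atTop 1] with M hM
    have hs : (0:ℝ) < (M:ℝ) := by exact_mod_cast Nat.lt_of_lt_of_le Nat.zero_lt_one hM
    have hΓx : 0 < Real.Gamma (M:ℝ) := Real.Gamma_pos_of_pos hs
    have hΓh : 0 < Real.Gamma ((M:ℝ) + 1/2) := Real.Gamma_pos_of_pos (by linarith)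
    have hub : e M ≤ Real.sqrt (M:ℝ) := by
      rw [he, div_le_iff₀ hΓx]
      calc Real.Gamma ((M:ℝ) + 1/2) ≤ Real.Gamma (M:ℝ) * Real.sqrt (M:ℝ) :=
            gamma_half_upper (M:ℝ) hs
        _ = Real.sqrt (M:ℝ) * Real.Gamma (M:ℝ) := by ring
    have he0 : 0 ≤ e M := by rw [he]; positivity
    have : e M ^ 2 ≤ (M:ℝ) := by
      have := pow_le_pow_left₀ he0 hub 2
      rwa [Real.sq_sqrt hs.le] at this
    rw [div_le_one hs]
    exact this

/-- Theorem 1 of the paper (limiting expression): with one user per cell, a common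
training sequence and zero-forcing precoding, the closed-form achievable rate
`R_j(M)` converges, as the number of antennas `M → ∞`, to
`log₂(1 + (β_jj²/κ_j) / (Σ_{l≠j} β_jl²/κ_l))`. -/
theorem achievable_rate_saturates (L : ℕ) (hL : 2 ≤ L) (j : Fin L)
    (pf pr τ : ℝ) (hpf : 0 < pf) (hpr : 0 < pr) (hτ : 0 < τ)
    (β : Fin L → Fin L → ℝ) (hβ : ∀ i l, 0 < β i l)
    (κ : Fin L → ℝ) (hκ : ∀ l, κ l = 1 + pr * τ * ∑ i, β i l)
    (e : ℕ → ℝ) (he : ∀ M : ℕ, e M = Real.Gamma ((M : ℝ) + 1 / 2) / Real.Gamma (M : ℝ))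
    (R : ℕ → ℝ)
    (hR : ∀ M : ℕ, R M =
      Real.logb 2 (1 +
        (pf * β j j * (pr * τ * β j j / κ j) * (e M) ^ 2) /
          (1 + pf * β j j * (pr * τ * β j j / κ j) * ((M : ℝ) - (e M) ^ 2) +
            (∑ l ∈ univ.erase j, pf * β j l * (pr * τ * β j l / κ l) * (M : ℝ)) +
            ∑ l, pf * β j l * (1 + pr * τ * ∑ i ∈ univ.erase j, β i l) / κ l))) :
    Tendsto R atTop
      (nhds (Real.logb 2 (1 +
        (β j j ^ 2 / κ j) / (∑ l ∈ univ.erase j, β j l ^ 2 / κ l)))) := by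
  have hκpos : ∀ l, 0 < κ l := by
    intro l
    rw [hκ]
    have : 0 < ∑ i, β i l := Finset.sum_pos (fun i _ => hβ i l) ⟨j, mem_univ j⟩
    positivity
  -- abbreviations
  set A : ℝ := pf * β j j * (pr * τ * β j j / κ j) with hAdef
  set B : ℝ := ∑ l ∈ univ.erase j, pf * β j l * (pr * τ * β j l / κ l) with hBdef
  set C : ℝ := ∑ l, pf * β j l * (1 + pr * τ * ∑ i ∈ univ.erase j, β i l) / κ l with hCdef
  have hers : (univ.erase j).Nonempty := by
    rw [← Finset.card_pos, Finset.card_erase_of_mem (mem_univ j), Finset.card_univ,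
      Fintype.card_fin]
    omega
  have hA : 0 < A := by
    have := hβ j j; have := hκpos j; positivity
  have hB : 0 < B :=
    Finset.sum_pos (fun l _ => by have := hβ j l; have := hκpos l; positivity) hers
  -- limit of e²/M
  have ht := e_sq_div_tendsto e he
  have h1M : Tendsto (fun M : ℕ => (1:ℝ) / M) atTop (nhds 0) :=
    tendsto_one_div_atTop_nhds_zero_nat
  have hnum : Tendsto (fun M : ℕ => A * (e M ^ 2 / M)) atTop (nhds A) := by
    simpa using ht.const_mul A
  have hden : Tendsto (fun M : ℕ => 1/(M:ℝ) + A * (1 - e M ^ 2 / M) + B + C * (1/M))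
      atTop (nhds B) := by
    have h2 : Tendsto (fun M : ℕ => A * (1 - e M ^ 2 / M)) atTop (nhds 0) := by
      simpa using (ht.const_sub 1).const_mul A
    have h3 : Tendsto (fun M : ℕ => C * (1/(M:ℝ))) atTop (nhds 0) := by
      simpa using h1M.const_mul C
    have := ((h1M.add h2).add (tendsto_const_nhds (x := B))).add h3
    simpa using this
  have hq : Tendsto (fun M : ℕ =>
      A * (e M ^ 2 / M) / (1/(M:ℝ) + A * (1 - e M ^ 2 / M) + B + C * (1/M)))
      atTop (nhds (A / B)) := hnum.div hden hB.ne'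
  have harg : Tendsto (fun M : ℕ => 1 +
      A * (e M ^ 2 / M) / (1/(M:ℝ) + A * (1 - e M ^ 2 / M) + B + C * (1/M)))
      atTop (nhds (1 + A / B)) := tendsto_const_nhds.add hq
  have hABpos : 0 < 1 + A / B := by positivity
  have hlog : Tendsto (fun M : ℕ => Real.logb 2 (1 +
      A * (e M ^ 2 / M) / (1/(M:ℝ) + A * (1 - e M ^ 2 / M) + B + C * (1/M))))
      atTop (nhds (Real.logb 2 (1 + A / B))) :=
    (Real.continuousAt_logb hABpos.ne').tendsto.comp harg
  -- identify R with the rewritten form eventually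
  have hRcong : R =ᶠ[atTop] fun M : ℕ => Real.logb 2 (1 +
      A * (e M ^ 2 / M) / (1/(M:ℝ) + A * (1 - e M ^ 2 / M) + B + C * (1/M))) := by
    filter_upwards [eventually_ge_atTop 1] with M hM
    have hs : (0:ℝ) < (M:ℝ) := by exact_mod_cast Nat.lt_of_lt_of_le Nat.zero_lt_one hM
    rw [hR]
    congr 2
    have hsum : (∑ l ∈ univ.erase j, pf * β j l * (pr * τ * β j l / κ l) * (M : ℝ))
        = B * M := by rw [hBdef, Finset.sum_mul]
    rw [hsum]
    set N : ℝ := A * e M ^ 2 with hN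
    set D : ℝ := 1 + A * ((M:ℝ) - e M ^ 2) + B * M + C with hD
    have hdiv : 1/(M:ℝ) + A * (1 - e M ^ 2 / M) + B + C * (1/M) = D / M := by
      rw [hD]; field_simp
    have hnum' : A * (e M ^ 2 / M) = N / M := by rw [hN]; ring
    rw [hdiv, hnum']
    rw [div_div_div_cancel_right₀ hs.ne']
  rw [Filter.tendsto_congr' hRcong]
  -- identify the limit value
  have hval : A / B = (β j j ^ 2 / κ j) / (∑ l ∈ univ.erase j, β j l ^ 2 / κ l) := by
    have hA' : A = (pf * pr * τ) * (β j j ^ 2 / κ j) := by rw [hAdef]; ring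
    have hB' : B = (pf * pr * τ) * (∑ l ∈ univ.erase j, β j l ^ 2 / κ l) := by
      rw [hBdef, Finset.mul_sum]
      exact Finset.sum_congr rfl (fun l _ => by ring)
    rw [hA', hB', mul_div_mul_left _ _ (by positivity : pf * pr * τ ≠ 0)]
  rw [← hval]
  exact hlog
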